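/- Let X ~ Poisson(λ) and Y ~ Poisson(ν) be independent random variables with λ ≥ ν > 0, and let Z = X − Y. Then Pr(Z ≤ 0) ≤ exp(−(√λ − √ν)²). -/

import Mathlib

open MeasureTheory ProbabilityTheory

lemma exp_tsum_aux (x : ℝ) : HasSum (fun n : ℕ => x ^ n / n.factorial) (Real.exp x) := by
  rw [Real.exp_eq_exp_ℝ]
  exact NormedSpace.expSeries_div_hasSum_exp x

/-- **Skellam Chernoff bound.** If `X ~ Poisson(lam)` and `Y ~ Poisson(nu)` are independent
with `lam ≥ nu > 0`, and `Z = X - Y`, then `Pr(Z ≤ 0) ≤ exp(-(√lam - √nu)²)`. -/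
theorem skellam_chernoff_bound
    {Ω : Type*} [MeasurableSpace Ω] (P : Measure Ω) [IsProbabilityMeasure P]
    (X Y : Ω → ℕ) (lam nu : ℝ) (hnu : 0 < nu) (hle : nu ≤ lam)
    (hX : ∀ k : ℕ, P {ω | X ω = k} =
      ENNReal.ofReal (Real.exp (-lam) * lam ^ k / (Nat.factorial k)))
    (hY : ∀ k : ℕ, P {ω | Y ω = k} =
      ENNReal.ofReal (Real.exp (-nu) * nu ^ k / (Nat.factorial k)))
    (hindep : IndepFun X Y P) :
    P {ω | (X ω : ℤ) - (Y ω : ℤ) ≤ 0} ≤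
      ENNReal.ofReal (Real.exp (-(Real.sqrt lam - Real.sqrt nu) ^ 2)) := by
  have hlam : 0 < lam := lt_of_lt_of_le hnu hle
  set sl := Real.sqrt lam with hsl_def
  set sn := Real.sqrt nu with hsn_def
  have hsl : 0 < sl := Real.sqrt_pos.2 hlam
  have hsn : 0 < sn := Real.sqrt_pos.2 hnu
  have hsl_sq : sl * sl = lam := Real.mul_self_sqrt hlam.le
  have hsn_sq : sn * sn = nu := Real.mul_self_sqrt hnu.le
  set t : ℝ := sn / sl with ht_def
  have ht0 : 0 < t := div_pos hsn hsl
  have ht1 : t ≤ 1 := by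
    rw [ht_def, div_le_one hsl]
    exact Real.sqrt_le_sqrt hle
  -- weights
  set a : ℕ → ℝ := fun j => Real.exp (-lam) * (t * lam) ^ j / j.factorial with ha_def
  set b : ℕ → ℝ := fun k => Real.exp (-nu) * (nu / t) ^ k / k.factorial with hb_def
  have ha_nonneg : ∀ j, 0 ≤ a j := by
    intro j
    have : 0 ≤ t * lam := by positivity
    rw [ha_def]
    positivity
  have hb_nonneg : ∀ k, 0 ≤ b k := by
    intro k
    have : 0 ≤ nu / t := by positivity
    rw [hb_def]
    positivity
  -- decomposition of the event
  set S : ℕ × ℕ → Set Ω := fun p => {ω | X ω = p.1 ∧ Y ω = p.2 ∧ p.1 ≤ p.2} with hS_def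
  have hsub : {ω | (X ω : ℤ) - (Y ω : ℤ) ≤ 0} ⊆ ⋃ p, S p := by
    intro ω hω
    have hle' : X ω ≤ Y ω := by
      have : (X ω : ℤ) ≤ (Y ω : ℤ) := by
        have := hω
        simp only [Set.mem_setOf_eq] at this
        linarith
      exact_mod_cast this
    exact Set.mem_iUnion.2 ⟨(X ω, Y ω), rfl, rfl, hle'⟩
  -- per-term bound
  have hterm : ∀ p : ℕ × ℕ,
      P (S p) ≤ ENNReal.ofReal (a p.1) * ENNReal.ofReal (b p.2) := by
    rintro ⟨j, k⟩
    by_cases hjk : j ≤ k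
    · have hSeq : S (j, k) = X ⁻¹' {j} ∩ Y ⁻¹' {k} := by
        ext ω
        simp [hS_def, hjk, Set.mem_preimage, and_assoc]
      have hmul : P (S (j, k)) = P {ω | X ω = j} * P {ω | Y ω = k} := by
        rw [hSeq, hindep.measure_inter_preimage_eq_mul _ _
          (measurableSet_singleton j) (measurableSet_singleton k)]
        rfl
      rw [hmul, hX j, hY k, ← ENNReal.ofReal_mul (by positivity),
        ← ENNReal.ofReal_mul (ha_nonneg j)]
      apply ENNReal.ofReal_le_ofReal
      -- real inequality: pX j * pY k ≤ a j * b k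
      have h1 : (1 : ℝ) ≤ t ^ j / t ^ k := by
        rw [le_div_iff₀ (pow_pos ht0 k), one_mul]
        exact pow_le_pow_of_le_one ht0.le ht1 hjk
      have key : Real.exp (-lam) * lam ^ j / j.factorial *
          (Real.exp (-nu) * nu ^ k / k.factorial) ≤ a j * b k := by
        have ha' : a j = (Real.exp (-lam) * lam ^ j / j.factorial) * t ^ j := by
          rw [ha_def]; simp only [mul_pow]; ring
        have hb' : b k = (Real.exp (-nu) * nu ^ k / k.factorial) * (1 / t ^ k) := by
          rw [hb_def]; rw [div_pow]; ring
        rw [ha', hb']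
        have hpos : 0 ≤ Real.exp (-lam) * lam ^ j / j.factorial *
            (Real.exp (-nu) * nu ^ k / k.factorial) := by positivity
        calc Real.exp (-lam) * lam ^ j / j.factorial *
              (Real.exp (-nu) * nu ^ k / k.factorial)
            = Real.exp (-lam) * lam ^ j / j.factorial *
              (Real.exp (-nu) * nu ^ k / k.factorial) * 1 := by ring
          _ ≤ Real.exp (-lam) * lam ^ j / j.factorial *
              (Real.exp (-nu) * nu ^ k / k.factorial) * (t ^ j / t ^ k) :=
              mul_le_mul_of_nonneg_left h1 hpos
          _ = Real.exp (-lam) * lam ^ j / j.factorial * t ^ j *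
              (Real.exp (-nu) * nu ^ k / k.factorial * (1 / t ^ k)) := by ring
      exact key
    · have : S (j, k) = ∅ := by
        ext ω; simp [hS_def, hjk]
      rw [this]
      simp
  -- sums of the weights
  have hsum_a : HasSum a (Real.exp (t * lam - lam)) := by
    have := (exp_tsum_aux (t * lam)).mul_left (Real.exp (-lam))
    have heq : Real.exp (-lam) * Real.exp (t * lam) = Real.exp (t * lam - lam) := by
      rw [← Real.exp_add]; ring_nf
    simpa [ha_def, mul_div_assoc, heq] using this
  have hsum_b : HasSum b (Real.exp (nu / t - nu)) := by
    have := (exp_tsum_aux (nu / t)).mul_left (Real.exp (-nu))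
    have heq : Real.exp (-nu) * Real.exp (nu / t) = Real.exp (nu / t - nu) := by
      rw [← Real.exp_add]; ring_nf
    simpa [hb_def, mul_div_assoc, heq] using this
  have htsum_a : ∑' j, ENNReal.ofReal (a j) = ENNReal.ofReal (Real.exp (t * lam - lam)) := by
    rw [← ENNReal.ofReal_tsum_of_nonneg ha_nonneg hsum_a.summable, hsum_a.tsum_eq]
  have htsum_b : ∑' k, ENNReal.ofReal (b k) = ENNReal.ofReal (Real.exp (nu / t - nu)) := by
    rw [← ENNReal.ofReal_tsum_of_nonneg hb_nonneg hsum_b.summable, hsum_b.tsum_eq]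
  -- arithmetic identities
  have hta : t * lam = sn * sl := by
    rw [ht_def]
    field_simp
    nlinarith [hsl_sq]
  have htb : nu / t = sn * sl := by
    rw [ht_def]
    field_simp
    nlinarith [hsn_sq]
  -- putting it together
  calc P {ω | (X ω : ℤ) - (Y ω : ℤ) ≤ 0}
      ≤ P (⋃ p, S p) := measure_mono hsub
    _ ≤ ∑' p, P (S p) := measure_iUnion_le _
    _ ≤ ∑' p : ℕ × ℕ, ENNReal.ofReal (a p.1) * ENNReal.ofReal (b p.2) :=
        ENNReal.tsum_le_tsum hterm
    _ = (∑' j, ENNReal.ofReal (a j)) * (∑' k, ENNReal.ofReal (b k)) := by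
        rw [ENNReal.tsum_prod']
        simp_rw [ENNReal.tsum_mul_left]
        rw [ENNReal.tsum_mul_right]
    _ = ENNReal.ofReal (Real.exp (t * lam - lam) * Real.exp (nu / t - nu)) := by
        rw [htsum_a, htsum_b, ENNReal.ofReal_mul (Real.exp_nonneg _)]
    _ = ENNReal.ofReal (Real.exp (-(sl - sn) ^ 2)) := by
        congr 1
        rw [← Real.exp_add, hta, htb]
        congr 1
        nlinarith [hsl_sq, hsn_sq]
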